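/- Let k ≥ 2 and n ≥ 2, and let q_k be the pattern 1 (k+1) k (k−1) ⋯ 2 of length k+1. If π is a permutation of {1,…,n} avoiding 123, 213 and q_k with π(2) = n, then there exists an integer j with 1 ≤ j ≤ k−1 such that π(1) = n−j, the first j+1 entries of π are (n−j), n, (n−1), …, (n−j+1) in this order, and the remaining n−j−1 entries form a permutation of {1,…,n−j−1} that avoids 123, 213 and q_k. -/
import Mathlib


/-- A permutation `σ` of `{1,…,n}` contains the pattern `τ` (given in one-line
notation as a function `Fin k → ℕ`) if there is a strictly increasing choice of
indices along which `σ` is order-isomorphic to `τ`. -/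
def Contains {n k : ℕ} (σ : Equiv.Perm (Fin n)) (τ : Fin k → ℕ) : Prop :=
  ∃ f : Fin k → Fin n, StrictMono f ∧ ∀ a b : Fin k, σ (f a) < σ (f b) ↔ τ a < τ b

/-- `σ` avoids the pattern `τ`. -/
def Avoids {n k : ℕ} (σ : Equiv.Perm (Fin n)) (τ : Fin k → ℕ) : Prop :=
  ¬ Contains σ τ

def p123 : Fin 3 → ℕ := ![1, 2, 3]
def p132 : Fin 3 → ℕ := ![1, 3, 2]
def p213 : Fin 3 → ℕ := ![2, 1, 3]
def p1432 : Fin 4 → ℕ := ![1, 4, 3, 2]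
def p3214 : Fin 4 → ℕ := ![3, 2, 1, 4]
def p2143 : Fin 4 → ℕ := ![2, 1, 4, 3]

/-- The pattern `q_k = 1 (k+1) k (k-1) ⋯ 2` of length `k+1` (one-line notation,
position `j` is 0-indexed here, values 1-indexed). -/
def qpat (k : ℕ) : Fin (k + 1) → ℕ := fun j => if j.val = 0 then 1 else k + 2 - j.val

/-- The pattern `r_k = k (k-1) ⋯ 2 1 (k+1)` of length `k+1`. -/
def rpat (k : ℕ) : Fin (k + 1) → ℕ := fun j => if j.val = k then k + 1 else k - j.val

/-- The pattern `s_k = (k-1)(k-2) ⋯ 2 1 (k+1) k` of length `k+1`. -/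
def spat (k : ℕ) : Fin (k + 1) → ℕ := fun j =>
  if j.val = k - 1 then k + 1 else if j.val = k then k else k - 1 - j.val

/-- The pattern `u_k = 2 1 (k+1) k (k-1) ⋯ 4 3` of length `k+1`. -/
def upat (k : ℕ) : Fin (k + 1) → ℕ := fun j =>
  if j.val = 0 then 2 else if j.val = 1 then 1 else k + 3 - j.val

lemma no_two_smaller {n : ℕ} (π : Equiv.Perm (Fin n))
    (h1 : Avoids π p123) (h2 : Avoids π p213) (a b c : Fin n)
    (hab : a < b) (hbc : b < c) (hac : π a < π c) (hbc2 : π b < π c) : False := by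
  have hmono : StrictMono ![a, b, c] := by
    intro x y hxy
    fin_cases x <;> fin_cases y <;> simp_all <;> omega
  rcases lt_trichotomy (π a) (π b) with h | h | h
  · apply h1
    refine ⟨![a, b, c], hmono, ?_⟩
    intro x y
    fin_cases x <;> fin_cases y <;> simp [p123] <;> omega
  · have : a = b := π.injective h
    exact absurd this (ne_of_lt hab)
  · apply h2
    refine ⟨![a, b, c], hmono, ?_⟩
    intro x y
    fin_cases x <;> fin_cases y <;> simp [p213] <;> omega

lemma avoids_transfer {n N m : ℕ} (π : Equiv.Perm (Fin n)) (σ : Equiv.Perm (Fin N))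
    (e : Fin N → Fin n) (he : StrictMono e)
    (hval : ∀ i, (π (e i)).val = (σ i).val) (τ : Fin m → ℕ)
    (h : Avoids π τ) : Avoids σ τ := by
  rintro ⟨f, hf, hiff⟩
  refine h ⟨e ∘ f, he.comp hf, fun a b => ?_⟩
  rw [← hiff a b]
  simp only [Function.comp_apply, Fin.lt_def, hval]

theorem stmt5 (k n : ℕ) (hk : 2 ≤ k) (hn : 2 ≤ n) (π : Equiv.Perm (Fin n))
    (h1 : Avoids π p123) (h2 : Avoids π p213) (h3 : Avoids π (qpat k))
    (hmax : (π ⟨1, by omega⟩).val = n - 1) :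
    ∃ j : ℕ, 1 ≤ j ∧ j ≤ k - 1 ∧ ∃ hjn : j < n,
      (π ⟨0, by omega⟩).val = n - 1 - j ∧
      (∀ i : ℕ, ∀ _h2i : 2 ≤ i, ∀ _hij : i ≤ j, (π ⟨i, by omega⟩).val = n - i) ∧
      ∃ σ : Equiv.Perm (Fin (n - j - 1)),
        Avoids σ p123 ∧ Avoids σ p213 ∧ Avoids σ (qpat k) ∧
        ∀ i : Fin (n - j - 1),
          (π ⟨j + 1 + i.val, by have := i.isLt; omega⟩).val = (σ i).val := by
  have h0n : 0 < n := by omega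
  have h1n : 1 < n := by omega
  obtain ⟨v, hv⟩ : ∃ v, (π ⟨0, h0n⟩).val = v := ⟨_, rfl⟩
  have hvlt : v < n := hv ▸ (π _).isLt
  have hvne : v ≠ n - 1 := by
    intro h
    have heq : π ⟨0, h0n⟩ = π ⟨1, h1n⟩ := Fin.ext (by omega)
    have h01 := π.injective heq
    rw [Fin.ext_iff] at h01
    simp at h01
  obtain ⟨j, hjdef⟩ : ∃ j, j = n - 1 - v := ⟨_, rfl⟩
  have hj1 : 1 ≤ j := by omega
  have hjn : j < n := by omega
  have hv_eq : v = n - 1 - j := by omega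
  -- the middle block
  have hstep : ∀ i, 2 ≤ i → i ≤ j → ∀ hin : i < n, (π ⟨i, hin⟩).val = n - i := by
    intro i
    induction i using Nat.strong_induction_on with
    | _ i IH =>
      intro h2i hij hin
      have hknown : ∀ m, 1 ≤ m → m < i → ∀ hmn : m < n, (π ⟨m, hmn⟩).val = n - m := by
        intro m h1m hmi hmn
        rcases Nat.lt_or_ge m 2 with h | h
        · have hm1 : m = 1 := by omega
          subst hm1; exact hmax
        · exact IH m hmi h (by omega) hmn
      have hni : n - i < n := by omega
      obtain ⟨c, hc⟩ : ∃ c, c = π.symm ⟨n - i, hni⟩ := ⟨_, rfl⟩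
      have hπc : (π c).val = n - i := by
        rw [hc, Equiv.apply_symm_apply]
      have hci : i ≤ c.val := by
        by_contra hlt
        push_neg at hlt
        rcases Nat.eq_zero_or_pos c.val with h0 | hpos
        · have hc0 : c = ⟨0, h0n⟩ := Fin.ext h0
          rw [hc0] at hπc
          omega
        · have hcv := hknown c.val hpos hlt c.isLt
          simp only [Fin.eta] at hcv
          omega
      rcases eq_or_lt_of_le hci with heq | hlt
      · have heq2 : (⟨i, hin⟩ : Fin n) = c := Fin.ext heq
        rw [heq2]
        omega
      · exfalso
        have hne : (π ⟨i, hin⟩).val ≠ n - i := by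
          intro h
          have heq : π ⟨i, hin⟩ = π c := Fin.ext (by omega)
          have := π.injective heq
          rw [Fin.ext_iff] at this
          simp only [] at this
          omega
        have hnlt : ¬ (π ⟨i, hin⟩ < π c) := by
          intro hπi
          apply no_two_smaller π h1 h2 ⟨0, h0n⟩ ⟨i, hin⟩ c
          · rw [Fin.lt_def]; simp; omega
          · rw [Fin.lt_def]; simp; omega
          · rw [Fin.lt_def]; omega
          · exact hπi
        rw [Fin.lt_def] at hnlt
        push_neg at hnlt
        have hgt : n - i < (π ⟨i, hin⟩).val := by omega
        have hwlt : (π ⟨i, hin⟩).val < n := (π _).isLt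
        obtain ⟨w, hw⟩ : ∃ w, (π ⟨i, hin⟩).val = w := ⟨_, rfl⟩
        have hmv := hknown (n - w) (by omega) (by omega) (by omega)
        have heq : π ⟨n - w, by omega⟩ = π ⟨i, hin⟩ := Fin.ext (by omega)
        have := π.injective heq
        rw [Fin.ext_iff] at this
        simp only [] at this
        omega
  -- j ≤ k - 1
  have hjk : j ≤ k - 1 := by
    by_contra hlt
    push_neg at hlt
    have hkj : k ≤ j := by omega
    have hkn : k < n := by omega
    apply h3
    refine ⟨fun a => ⟨a.val, by have := a.isLt; omega⟩, ?_, ?_⟩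
    · intro x y hxy
      rw [Fin.lt_def]
      exact hxy
    · have hval : ∀ a : Fin (k + 1),
          (π ⟨a.val, by have := a.isLt; omega⟩).val =
            if a.val = 0 then n - 1 - j else n - a.val := by
        intro a
        rcases Nat.eq_zero_or_pos a.val with h0 | hpos
        · rw [if_pos h0, ← hv_eq, ← hv]
          congr 2
          exact Fin.ext h0
        · rw [if_neg (by omega)]
          rcases Nat.lt_or_ge a.val 2 with h | h
          · have ha1 : a.val = 1 := by omega
            have : (π ⟨a.val, by have := a.isLt; omega⟩).val = (π ⟨1, h1n⟩).val := by
              congr 2; exact Fin.ext ha1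
            rw [this, hmax, ha1]
          · exact hstep a.val h (by have := a.isLt; omega) (by have := a.isLt; omega)
      intro a b
      rw [Fin.lt_def, hval a, hval b]
      have ha := a.isLt
      have hb := b.isLt
      simp only [qpat]
      split_ifs <;> omega
  -- the tail
  have htail : ∀ p : ℕ, j + 1 ≤ p → ∀ hpn : p < n, (π ⟨p, hpn⟩).val < n - j - 1 := by
    intro p hjp hpn
    by_contra hge
    push_neg at hge
    obtain ⟨w, hw⟩ : ∃ w, (π ⟨p, hpn⟩).val = w := ⟨_, rfl⟩
    have hwlt : w < n := hw ▸ (π _).isLt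
    rcases Nat.eq_or_lt_of_le hge with heq | hgt
    · have heq2 : π ⟨0, h0n⟩ = π ⟨p, hpn⟩ := Fin.ext (by omega)
      have := π.injective heq2
      rw [Fin.ext_iff] at this
      simp only [] at this
      omega
    · have hmv : (π ⟨n - w, by omega⟩).val = n - (n - w) := by
        rcases Nat.lt_or_ge (n - w) 2 with h | h
        · have hm1 : n - w = 1 := by omega
          have : (π ⟨n - w, by omega⟩).val = (π ⟨1, h1n⟩).val := by
            congr 2; exact Fin.ext hm1
          rw [this, hmax, hm1]
        · exact hstep (n - w) h (by omega) (by omega)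
      have heq : π ⟨n - w, by omega⟩ = π ⟨p, hpn⟩ := Fin.ext (by omega)
      have := π.injective heq
      rw [Fin.ext_iff] at this
      simp only [] at this
      omega
  have hg : ∀ i : Fin (n - j - 1),
      (π ⟨j + 1 + i.val, by have := i.isLt; omega⟩).val < n - j - 1 := by
    intro i
    exact htail (j + 1 + i.val) (by omega) (by have := i.isLt; omega)
  have hginj : Function.Injective
      (fun i : Fin (n - j - 1) =>
        (⟨(π ⟨j + 1 + i.val, by have := i.isLt; omega⟩).val, hg i⟩ : Fin (n - j - 1))) := by
    intro x y hxy
    rw [Fin.ext_iff] at hxy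
    simp only [] at hxy
    have heq : π ⟨j + 1 + x.val, by have := x.isLt; omega⟩ =
        π ⟨j + 1 + y.val, by have := y.isLt; omega⟩ := Fin.ext hxy
    have := π.injective heq
    rw [Fin.ext_iff] at this
    simp only [] at this
    exact Fin.ext (by omega)
  refine ⟨j, hj1, hjk, hjn, by omega, ?_,
    Equiv.ofBijective _ (Finite.injective_iff_bijective.mp hginj), ?_, ?_, ?_, ?_⟩
  · intro i h2i hij
    exact hstep i h2i hij (by omega)
  all_goals {
    have hmonoE : StrictMono
        (fun i : Fin (n - j - 1) =>
          (⟨j + 1 + i.val, by have := i.isLt; omega⟩ : Fin n)) := by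
      intro x y hxy
      rw [Fin.lt_def] at hxy ⊢
      simp only []
      omega
    have hσval : ∀ i : Fin (n - j - 1),
        (π ⟨j + 1 + i.val, by have := i.isLt; omega⟩).val =
          ((Equiv.ofBijective _ (Finite.injective_iff_bijective.mp hginj)) i).val := fun i => rfl
    first
      | exact avoids_transfer π _ _ hmonoE hσval p123 h1
      | exact avoids_transfer π _ _ hmonoE hσval p213 h2
      | exact avoids_transfer π _ _ hmonoE hσval (qpat k) h3
      | exact hσval
  }
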